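/- The orbit of e_0 − e_1 under the Weyl group W_6 consists exactly of the following 27 classes: e_0 − e_i for 1 ≤ i ≤ 6; 2e_0 − e_i − e_j − e_k − e_l for distinct 1 ≤ i < j < k < l ≤ 6; and 3e_0 − 2e_i − (sum of e_j over all j ≠ i with 1 ≤ j ≤ 6) for 1 ≤ i ≤ 6. -/
import Mathlib


/-- The intersection form on the divisor class lattice `L = Fin 7 → ℤ`:
`⟨x, y⟩ = x₀y₀ − x₁y₁ − ⋯ − x₆y₆`. -/
def form (x y : Fin 7 → ℤ) : ℤ :=
  x 0 * y 0 - x 1 * y 1 - x 2 * y 2 - x 3 * y 3 - x 4 * y 4 - x 5 * y 5 - x 6 * y 6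

/-- The standard basis vectors `e 0, …, e 6` of `L`. -/
def e (i : Fin 7) : Fin 7 → ℤ := fun j => if j = i then 1 else 0

/-- The anticanonical class `κ = 3e₀ − e₁ − ⋯ − e₆`. -/
def kappa : Fin 7 → ℤ := (3 : ℤ) • e 0 - e 1 - e 2 - e 3 - e 4 - e 5 - e 6

/-- The simple roots `r₀ = e₀ − e₁ − e₂ − e₃` and `rᵢ = eᵢ − e_{i+1}` for `1 ≤ i ≤ 5`. -/
def r : Fin 6 → (Fin 7 → ℤ) :=
  ![e 0 - e 1 - e 2 - e 3, e 1 - e 2, e 2 - e 3, e 3 - e 4, e 4 - e 5, e 5 - e 6]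

lemma form_add_left (x y v : Fin 7 → ℤ) : form (x + y) v = form x v + form y v := by
  simp only [form, Pi.add_apply]; ring

lemma form_smul_left (c : ℤ) (x v : Fin 7 → ℤ) : form (c • x) v = c * form x v := by
  simp only [form, Pi.smul_apply, smul_eq_mul]; ring

/-- The reflection `x ↦ x + ⟨x, v⟩·v` as a ℤ-linear map. -/
def reflMap (v : Fin 7 → ℤ) : (Fin 7 → ℤ) →ₗ[ℤ] (Fin 7 → ℤ) where
  toFun x := x + form x v • v
  map_add' x y := by
    funext j
    simp only [form, Pi.add_apply, Pi.smul_apply, smul_eq_mul]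
    ring
  map_smul' c x := by
    funext j
    simp only [form, Pi.add_apply, Pi.smul_apply, smul_eq_mul, RingHom.id_apply]
    ring

lemma reflMap_invol (v : Fin 7 → ℤ) (hv : form v v = -2) (x : Fin 7 → ℤ) :
    reflMap v (reflMap v x) = x := by
  show (x + form x v • v) + form (x + form x v • v) v • v = x
  rw [form_add_left, form_smul_left, hv]
  module

/-- The reflection `sᵢ(x) = x + ⟨x, rᵢ⟩·rᵢ` through the simple root `rᵢ`,
as a ℤ-linear automorphism of `L`. -/
def s (i : Fin 6) : (Fin 7 → ℤ) ≃ₗ[ℤ] (Fin 7 → ℤ) :=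
  LinearEquiv.ofLinear (reflMap (r i)) (reflMap (r i))
    (LinearMap.ext fun x => reflMap_invol (r i) (by fin_cases i <;> decide) x)
    (LinearMap.ext fun x => reflMap_invol (r i) (by fin_cases i <;> decide) x)

/-- The Weyl group `W₆`: the subgroup of the group of ℤ-linear automorphisms of `L`
generated by the reflections `s₀, …, s₅`. -/
def W6 : Subgroup ((Fin 7 → ℤ) ≃ₗ[ℤ] (Fin 7 → ℤ)) :=
  Subgroup.closure (Set.range s)

/-- The sum `e₁ + e₂ + e₃ + e₄ + e₅ + e₆`. -/
def sumE : Fin 7 → ℤ := e 1 + e 2 + e 3 + e 4 + e 5 + e 6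

/-- The `W₆`-orbit of `e₀ − e₁` consists of the 27 classes `e₀ − eᵢ`,
`2e₀ − eᵢ − eⱼ − e_k − e_l`, and `3e₀ − 2eᵢ − ∑_{j ≠ i} eⱼ`. -/
def SF : Finset (Fin 7 → ℤ) :=
  {![1,-1,0,0,0,0,0],
    ![1,0,-1,0,0,0,0],
    ![1,0,0,-1,0,0,0],
    ![1,0,0,0,-1,0,0],
    ![2,-1,-1,-1,-1,0,0],
    ![1,0,0,0,0,-1,0],
    ![2,-1,-1,-1,0,-1,0],
    ![1,0,0,0,0,0,-1],
    ![2,-1,-1,0,-1,-1,0],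
    ![2,-1,-1,-1,0,0,-1],
    ![2,-1,0,-1,-1,-1,0],
    ![2,-1,-1,0,-1,0,-1],
    ![2,0,-1,-1,-1,-1,0],
    ![2,-1,0,-1,-1,0,-1],
    ![2,-1,-1,0,0,-1,-1],
    ![2,0,-1,-1,-1,0,-1],
    ![2,-1,0,-1,0,-1,-1],
    ![2,0,-1,-1,0,-1,-1],
    ![2,-1,0,0,-1,-1,-1],
    ![2,0,-1,0,-1,-1,-1],
    ![3,-2,-1,-1,-1,-1,-1],
    ![3,-1,-2,-1,-1,-1,-1],
    ![2,0,0,-1,-1,-1,-1],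
    ![3,-1,-1,-2,-1,-1,-1],
    ![3,-1,-1,-1,-2,-1,-1],
    ![3,-1,-1,-1,-1,-2,-1],
    ![3,-1,-1,-1,-1,-1,-2]}

/-- The orbit predicate. -/
def Orb (x : Fin 7 → ℤ) : Prop := ∃ w ∈ W6, w (e 0 - e 1) = x

lemma orb_step (i : Fin 6) {x y : Fin 7 → ℤ} (h : Orb x) (hy : s i x = y) : Orb y := by
  obtain ⟨w, hw, hx⟩ := h
  refine ⟨s i * w, mul_mem (Subgroup.subset_closure ⟨i, rfl⟩) hw, ?_⟩
  show s i (w (e 0 - e 1)) = y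
  rw [hx, hy]

lemma gen_maps : ∀ i : Fin 6, ∀ v ∈ SF, s i v ∈ SF := by decide

lemma mapsTo_inv (w : (Fin 7 → ℤ) ≃ₗ[ℤ] (Fin 7 → ℤ)) (h : ∀ v ∈ SF, w v ∈ SF) :
    ∀ v ∈ SF, w⁻¹ v ∈ SF := by
  have himg : SF.image ⇑w ⊆ SF := by
    intro v hv
    obtain ⟨u, hu, rfl⟩ := Finset.mem_image.1 hv
    exact h u hu
  have hcard : SF.card ≤ (SF.image ⇑w).card := by
    rw [Finset.card_image_of_injective _ w.injective]
  have heq : SF.image ⇑w = SF := Finset.eq_of_subset_of_card_le himg hcard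
  intro v hv
  rw [← heq] at hv
  obtain ⟨u, hu, hwu⟩ := Finset.mem_image.1 hv
  have : w⁻¹ v = u := by rw [← hwu]; exact w.symm_apply_apply u
  rwa [this]

lemma mem1 : ∀ i : Fin 7, 0 < i → e 0 - e i ∈ SF := by decide

lemma mem2 : ∀ i j k l : Fin 7, 0 < i → i < j → j < k → k < l →
    (2 : ℤ) • e 0 - e i - e j - e k - e l ∈ SF := by decide

lemma mem3 : ∀ i : Fin 7, 0 < i → (3 : ℤ) • e 0 - sumE - e i ∈ SF := by decide

lemma SF_sub : ∀ v ∈ SF,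
      ((∃ i : Fin 7, 0 < i ∧ v = e 0 - e i) ∨
       (∃ i j k l : Fin 7, 0 < i ∧ i < j ∧ j < k ∧ k < l ∧
          v = (2 : ℤ) • e 0 - e i - e j - e k - e l) ∨
       (∃ i : Fin 7, 0 < i ∧ v = (3 : ℤ) • e 0 - sumE - e i)) := by decide

lemma orbSF : ∀ v ∈ SF, Orb v := by
  have o0 : Orb ![1,-1,0,0,0,0,0] := ⟨1, one_mem _, by decide⟩
  have o1 : Orb ![1,0,-1,0,0,0,0] := orb_step 1 o0 (by decide)
  have o2 : Orb ![1,0,0,-1,0,0,0] := orb_step 2 o1 (by decide)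
  have o3 : Orb ![1,0,0,0,-1,0,0] := orb_step 3 o2 (by decide)
  have o4 : Orb ![2,-1,-1,-1,-1,0,0] := orb_step 0 o3 (by decide)
  have o5 : Orb ![1,0,0,0,0,-1,0] := orb_step 4 o3 (by decide)
  have o6 : Orb ![2,-1,-1,-1,0,-1,0] := orb_step 4 o4 (by decide)
  have o7 : Orb ![1,0,0,0,0,0,-1] := orb_step 5 o5 (by decide)
  have o8 : Orb ![2,-1,-1,0,-1,-1,0] := orb_step 3 o6 (by decide)
  have o9 : Orb ![2,-1,-1,-1,0,0,-1] := orb_step 5 o6 (by decide)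
  have o10 : Orb ![2,-1,0,-1,-1,-1,0] := orb_step 2 o8 (by decide)
  have o11 : Orb ![2,-1,-1,0,-1,0,-1] := orb_step 5 o8 (by decide)
  have o12 : Orb ![2,0,-1,-1,-1,-1,0] := orb_step 1 o10 (by decide)
  have o13 : Orb ![2,-1,0,-1,-1,0,-1] := orb_step 5 o10 (by decide)
  have o14 : Orb ![2,-1,-1,0,0,-1,-1] := orb_step 4 o11 (by decide)
  have o15 : Orb ![2,0,-1,-1,-1,0,-1] := orb_step 5 o12 (by decide)
  have o16 : Orb ![2,-1,0,-1,0,-1,-1] := orb_step 4 o13 (by decide)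
  have o17 : Orb ![2,0,-1,-1,0,-1,-1] := orb_step 4 o15 (by decide)
  have o18 : Orb ![2,-1,0,0,-1,-1,-1] := orb_step 3 o16 (by decide)
  have o19 : Orb ![2,0,-1,0,-1,-1,-1] := orb_step 3 o17 (by decide)
  have o20 : Orb ![3,-2,-1,-1,-1,-1,-1] := orb_step 0 o18 (by decide)
  have o21 : Orb ![3,-1,-2,-1,-1,-1,-1] := orb_step 0 o19 (by decide)
  have o22 : Orb ![2,0,0,-1,-1,-1,-1] := orb_step 2 o19 (by decide)
  have o23 : Orb ![3,-1,-1,-2,-1,-1,-1] := orb_step 2 o21 (by decide)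
  have o24 : Orb ![3,-1,-1,-1,-2,-1,-1] := orb_step 3 o23 (by decide)
  have o25 : Orb ![3,-1,-1,-1,-1,-2,-1] := orb_step 4 o24 (by decide)
  have o26 : Orb ![3,-1,-1,-1,-1,-1,-2] := orb_step 5 o25 (by decide)
  intro v hv
  fin_cases hv <;> assumption

theorem statement_6 (x : Fin 7 → ℤ) :
    (∃ w ∈ W6, w (e 0 - e 1) = x) ↔
      ((∃ i : Fin 7, 0 < i ∧ x = e 0 - e i) ∨
       (∃ i j k l : Fin 7, 0 < i ∧ i < j ∧ j < k ∧ k < l ∧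
          x = (2 : ℤ) • e 0 - e i - e j - e k - e l) ∨
       (∃ i : Fin 7, 0 < i ∧ x = (3 : ℤ) • e 0 - sumE - e i)) := by
  constructor
  · rintro ⟨w, hw, rfl⟩
    have key : ∀ v ∈ SF, w v ∈ SF := by
      refine Subgroup.closure_induction (p := fun g _ => ∀ v ∈ SF, g v ∈ SF) ?_ ?_ ?_ ?_ hw
      · rintro g ⟨i, rfl⟩
        exact gen_maps i
      · intro v hv
        exact hv
      · intro a b _ _ ha hb v hv
        exact ha _ (hb v hv)
      · intro a _ ha
        exact mapsTo_inv a ha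
    exact SF_sub _ (key _ (by decide))
  · rintro (⟨i, hi, rfl⟩ | ⟨i, j, k, l, hi, hij, hjk, hkl, rfl⟩ | ⟨i, hi, rfl⟩)
    · exact orbSF _ (mem1 i hi)
    · exact orbSF _ (mem2 i j k l hi hij hjk hkl)
    · exact orbSF _ (mem3 i hi)
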